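/- Let w : E → ℝ be differentiable with w(x) ≥ 0 for every x ∈ E, and let K ≥ 0 be a constant such that w(y) ≤ w(x) + Dw(x)(y − x) + K·‖y − x‖² for all x, y ∈ E. Then ‖∇w(x)‖² ≤ 4·K·w(x) for every x ∈ E. (Glaeser-type gradient bound for nonnegative functions, used in the proof of Proposition 5.1 to obtain |∇w| ≤ c·w^(1/2).) -/

import Mathlib

/-- Glaeser-type gradient bound for nonnegative functions (used in the proof of
Proposition 5.1): if `w ≥ 0` is differentiable and
`w(y) ≤ w(x) + Dw(x)(y − x) + K·‖y − x‖²` for all `x, y`, then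
`‖∇w(x)‖² ≤ 4·K·w(x)` everywhere. -/
theorem gradient_sq_le_of_nonneg {E : Type*} [NormedAddCommGroup E]
    [InnerProductSpace ℝ E] [CompleteSpace E]
    (w : E → ℝ) (hw : Differentiable ℝ w) (hw0 : ∀ x, 0 ≤ w x)
    (K : ℝ) (hK : 0 ≤ K)
    (htaylor : ∀ x y, w y ≤ w x + fderiv ℝ w x (y - x) + K * ‖y - x‖ ^ 2) :
    ∀ x, ‖gradient w x‖ ^ 2 ≤ 4 * K * w x := by
  intro x
  set g := gradient w x with hg
  have hfd : ∀ v : E, fderiv ℝ w x v = inner ℝ g v := by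
    intro v
    have : fderiv ℝ w x = (InnerProductSpace.toDual ℝ E) g := by
      rw [hg, gradient, LinearIsometryEquiv.apply_symm_apply]
    rw [this]; rfl
  -- key inequality: for all t, 0 ≤ w x - t ‖g‖² + K t² ‖g‖²
  have key : ∀ t : ℝ, 0 ≤ w x - t * ‖g‖ ^ 2 + K * t ^ 2 * ‖g‖ ^ 2 := by
    intro t
    have h := htaylor x (x - t • g)
    have h0 := hw0 (x - t • g)
    rw [show x - t • g - x = -(t • g) by abel] at h
    rw [hfd] at h
    have hin : (inner ℝ g (-(t • g)) : ℝ) = -(t * ‖g‖ ^ 2) := by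
      rw [inner_neg_right, real_inner_smul_right, real_inner_self_eq_norm_sq]
    have hn : ‖-(t • g)‖ ^ 2 = t ^ 2 * ‖g‖ ^ 2 := by
      rw [norm_neg, norm_smul]
      simp [mul_pow]
    rw [hin, hn] at h
    nlinarith
  rcases eq_or_lt_of_le hK with hK0 | hKpos
  · -- K = 0 : then t ‖g‖² ≤ w x for all t, forcing g = 0
    have hg0 : ‖g‖ ^ 2 = 0 := by
      by_contra hne
      have hpos : 0 < ‖g‖ ^ 2 := lt_of_le_of_ne (by positivity) (Ne.symm hne)
      have := key ((w x + 1) / ‖g‖ ^ 2)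
      rw [← hK0] at this
      field_simp at this
      have hgn : ‖g‖ ≠ 0 := fun h => by simp [h] at hpos
      rw [mul_div_cancel_right₀ _ hgn] at this
      simp only [zero_mul, zero_div, add_zero] at this
      nlinarith
    rw [hg0]; exact mul_nonneg (by positivity) (hw0 x)
  · have h := key (1 / (2 * K))
    have hKne : K ≠ 0 := ne_of_gt hKpos
    have h4 : 0 ≤ 4 * K * (w x - (1 / (2 * K)) * ‖g‖ ^ 2
        + K * (1 / (2 * K)) ^ 2 * ‖g‖ ^ 2) := mul_nonneg (by positivity) h
    have h5 : 4 * K * (w x - (1 / (2 * K)) * ‖g‖ ^ 2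
        + K * (1 / (2 * K)) ^ 2 * ‖g‖ ^ 2) = 4 * K * w x - ‖g‖ ^ 2 := by
      field_simp
      ring
    linarith [h5 ▸ h4]
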